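/- arXiv:2202.05868 — 4 statements merged into one kernel-verified Lean document; each statement's English description precedes it below -/
import Mathlib

section
/- Let τ ∈ [0,1], let V₀, …, V_{h−1} be finite sets with V₀ nonempty, let P_i = V₀ ∪ ⋯ ∪ V_i (with P_{−1} = ∅), let λ = |P_{h−1}| and λ₀ = |V₀|. Suppose that for every 1 ≤ i ≤ h−1 the Jaccard similarity of P_{i−1} and V_i is at least τ, i.e. |P_{i−1} ∩ V_i| ≥ τ·|P_{i−1} ∪ V_i|. Then the total number of zero entries of the group lying in nonempty columns satisfies Σ_{i=0}^{h−1} (λ − |V_i|) ≤ h·((2−τ)·λ − λ₀). -/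
open Finset

/-- Let `τ ∈ [0,1]`, let `V₀, …, V_{h−1}` be finite sets with `V₀`
nonempty, let `P i = V₀ ∪ ⋯ ∪ V i` (so `(range i).biUnion V = P (i−1)`, with
`P (−1) = ∅`), `λ = |P (h−1)|`, `λ₀ = |V₀|`. If for every `1 ≤ i ≤ h−1` the Jaccard
similarity of `P (i−1)` and `V i` is at least `τ`, i.e.
`|P (i−1) ∩ V i| ≥ τ·|P (i−1) ∪ V i|`, then
`∑_{i=0}^{h−1} (λ − |V i|) ≤ h·((2−τ)·λ − λ₀)`. -/
theorem total_zeros_bound {α : Type*} [DecidableEq α] (τ : ℝ) (hτ0 : 0 ≤ τ) (hτ1 : τ ≤ 1)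
    (h : ℕ) (V : ℕ → Finset α) (hV0 : (V 0).Nonempty)
    (hsim : ∀ i, 1 ≤ i → i ≤ h - 1 →
      ((((Finset.range i).biUnion V) ∩ V i).card : ℝ)
        ≥ τ * ((((Finset.range i).biUnion V) ∪ V i).card : ℝ)) :
    ∑ i ∈ Finset.range h,
        ((((Finset.range h).biUnion V).card : ℝ) - ((V i).card : ℝ))
      ≤ (h : ℝ) * ((2 - τ) * (((Finset.range h).biUnion V).card : ℝ) - ((V 0).card : ℝ)) := by
  rcases Nat.eq_zero_or_pos h with rfl | hpos
  · simp
  set lam : ℝ := (((Finset.range h).biUnion V).card : ℝ) with hlam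
  have hsub0 : V 0 ⊆ (Finset.range h).biUnion V := by
    intro x hx; exact Finset.mem_biUnion.2 ⟨0, Finset.mem_range.2 hpos, hx⟩
  have hl0 : ((V 0).card : ℝ) ≤ lam := by
    rw [hlam]; exact_mod_cast Finset.card_le_card hsub0
  have key : ∀ i ∈ Finset.range h,
      lam - ((V i).card : ℝ) ≤ (2 - τ) * lam - ((V 0).card : ℝ) := by
    intro i hi
    rcases Nat.eq_zero_or_pos i with rfl | hipos
    · nlinarith [hl0, (V 0).card.cast_nonneg (α := ℝ)]
    · have hih : i ≤ h - 1 := Nat.le_sub_one_of_lt (Finset.mem_range.1 hi)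
      have hs := hsim i hipos hih
      have hsub : V 0 ⊆ (Finset.range i).biUnion V ∪ V i := by
        intro x hx
        exact Finset.mem_union_left _ (Finset.mem_biUnion.2 ⟨0, Finset.mem_range.2 hipos, hx⟩)
      have h1 : ((V 0).card : ℝ) ≤ ((((Finset.range i).biUnion V) ∪ V i).card : ℝ) := by
        exact_mod_cast Finset.card_le_card hsub
      have h2 : ((((Finset.range i).biUnion V) ∩ V i).card : ℝ) ≤ ((V i).card : ℝ) := by
        exact_mod_cast Finset.card_le_card (Finset.inter_subset_right)
      nlinarith [hl0]
  calc ∑ i ∈ Finset.range h, (lam - ((V i).card : ℝ))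
      ≤ ∑ _i ∈ Finset.range h, ((2 - τ) * lam - ((V 0).card : ℝ)) :=
        Finset.sum_le_sum key
    _ = (h : ℝ) * ((2 - τ) * lam - ((V 0).card : ℝ)) := by
        simp [Finset.sum_const, mul_comm]
        ring
end

section
/- (Theorem 1, case Δ_W = 1.) Let τ ∈ (0,1], let V₀, …, V_{h−1} be finite sets with V₀ nonempty, let P_i = V₀ ∪ ⋯ ∪ V_i (with P_{−1} = ∅), let λ = |P_{h−1}| and λ₀ = |V₀|. Suppose that (i) for every 1 ≤ i ≤ h−1 the Jaccard similarity of P_{i−1} and V_i is at least τ, i.e. |P_{i−1} ∩ V_i| ≥ τ·|P_{i−1} ∪ V_i|, and (ii) λ ≤ λ₀/(1 − τ/2). Then the density of the group after removing empty columns satisfies (Σ_{i=0}^{h−1} |V_i|) / (h·λ) ≥ τ/2. -/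
open Finset

/-- **Theorem 1, case `Δ_W = 1`.** Let `τ ∈ (0,1]`, let
`V₀, …, V_{h−1}` be finite sets with `V₀` nonempty, let `P i = V₀ ∪ ⋯ ∪ V i`
(so `(range i).biUnion V = P (i−1)`, with `P (−1) = ∅`), `λ = |P (h−1)|`,
`λ₀ = |V₀|`. Suppose (i) for every `1 ≤ i ≤ h−1` the Jaccard similarity of
`P (i−1)` and `V i` is at least `τ`, and (ii) `λ ≤ λ₀/(1 − τ/2)`. Then the
density of the group after removing empty columns satisfies
`(∑_{i=0}^{h−1} |V i|) / (h·λ) ≥ τ/2`. -/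
theorem group_density_ge (τ : ℝ) (hτ0 : 0 < τ) (hτ1 : τ ≤ 1)
    {α : Type*} [DecidableEq α] (h : ℕ) (hh : 1 ≤ h)
    (V : ℕ → Finset α) (hV0 : (V 0).Nonempty)
    (hsim : ∀ i, 1 ≤ i → i ≤ h - 1 →
      ((((Finset.range i).biUnion V) ∩ V i).card : ℝ)
        ≥ τ * ((((Finset.range i).biUnion V) ∪ V i).card : ℝ))
    (hgrow : ((((Finset.range h).biUnion V).card : ℝ))
        ≤ ((V 0).card : ℝ) / (1 - τ / 2)) :
    (∑ i ∈ Finset.range h, ((V i).card : ℝ))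
        / ((h : ℝ) * (((Finset.range h).biUnion V).card : ℝ)) ≥ τ / 2 := by
  set lam : ℝ := (((Finset.range h).biUnion V).card : ℝ) with hlam
  set l0 : ℝ := ((V 0).card : ℝ) with hl0
  have hl0pos : 0 < l0 := by
    rw [hl0]; exact_mod_cast Finset.card_pos.mpr hV0
  have hsub0 : V 0 ⊆ (Finset.range h).biUnion V :=
    Finset.subset_biUnion_of_mem V (Finset.mem_range.mpr hh)
  have hlamge : l0 ≤ lam := by
    rw [hl0, hlam]; exact_mod_cast Finset.card_le_card hsub0
  have hlampos : 0 < lam := lt_of_lt_of_le hl0pos hlamge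
  have hhpos : (0:ℝ) < (h:ℝ) := by exact_mod_cast hh
  have htau2 : 0 < 1 - τ / 2 := by linarith
  -- lower bound for each V i, 1 ≤ i < h
  have hVi : ∀ i ∈ Finset.Ico 1 h, τ * l0 ≤ ((V i).card : ℝ) := by
    intro i hi
    rw [Finset.mem_Ico] at hi
    have h1 : 1 ≤ i := hi.1
    have h2 : i ≤ h - 1 := Nat.le_sub_one_of_lt hi.2
    have hs := hsim i h1 h2
    have hsub : V 0 ⊆ ((Finset.range i).biUnion V) ∪ V i := by
      intro x hx
      exact Finset.mem_union_left _
        (Finset.mem_biUnion.mpr ⟨0, Finset.mem_range.mpr h1, hx⟩)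
    have h3 : l0 ≤ ((((Finset.range i).biUnion V) ∪ V i).card : ℝ) := by
      rw [hl0]; exact_mod_cast Finset.card_le_card hsub
    have h4 : (((Finset.range i).biUnion V ∩ V i).card : ℝ) ≤ ((V i).card : ℝ) := by
      exact_mod_cast Finset.card_le_card (Finset.inter_subset_right)
    nlinarith
  have hsum : l0 + ((h:ℝ) - 1) * (τ * l0) ≤ ∑ i ∈ Finset.range h, ((V i).card : ℝ) := by
    have hsplit : ∑ i ∈ Finset.range h, ((V i).card : ℝ)
        = l0 + ∑ i ∈ Finset.Ico 1 h, ((V i).card : ℝ) := by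
      rw [Finset.range_eq_Ico, Finset.sum_eq_sum_Ico_succ_bot hh]
    have hb : ((h - 1 : ℕ) : ℝ) * (τ * l0) ≤ ∑ i ∈ Finset.Ico 1 h, ((V i).card : ℝ) := by
      have := Finset.card_nsmul_le_sum (Finset.Ico 1 h) (fun i => ((V i).card : ℝ))
        (τ * l0) hVi
      simpa [Nat.card_Ico, nsmul_eq_mul] using this
    have hcast : ((h - 1 : ℕ) : ℝ) = (h:ℝ) - 1 := by
      push_cast [Nat.cast_sub hh]; ring
    rw [hsplit]
    rw [hcast] at hb
    linarith
  rw [ge_iff_le, div_le_div_iff₀ (by norm_num) (by positivity)]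
  have hg : lam * (1 - τ / 2) ≤ l0 := by
    rw [le_div_iff₀ htau2] at hgrow
    linarith
  have hh1 : (1:ℝ) ≤ (h:ℝ) := by exact_mod_cast hh
  nlinarith [mul_le_mul_of_nonneg_left hg (by positivity : (0:ℝ) ≤ τ * (h:ℝ)),
    mul_le_mul_of_nonneg_right hsum htau2.le,
    mul_nonneg hl0pos.le (mul_nonneg (by linarith : (0:ℝ) ≤ 1 - τ) (by linarith : (0:ℝ) ≤ 2 - τ)),
    mul_nonneg (mul_nonneg hl0pos.le (sub_nonneg.mpr hh1)) (mul_nonneg hτ0.le (by linarith : (0:ℝ) ≤ 1 - τ)),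
    Finset.sum_nonneg (fun i _ => by positivity : ∀ i ∈ Finset.range h, (0:ℝ) ≤ ((V i).card : ℝ))]
end

section
/- (Theorem 1, general Δ_W.) Let τ ∈ (0,1] and Δ_W ≥ 1 be a natural number. Let W₀, …, W_{h−1} be finite sets of natural numbers (the nonzero-column indices of h rows), and for each i let V_i = { j : ∃ k ∈ W_i with j·Δ_W ≤ k < (j+1)·Δ_W } be the quotient row of W_i with respect to the uniform column partition of width Δ_W. Let P_i = V₀ ∪ ⋯ ∪ V_i (with P_{−1} = ∅), λ = |P_{h−1}|, λ₀ = |V₀|, and assume V₀ is nonempty. Suppose that (i) for every 1 ≤ i ≤ h−1, |P_{i−1} ∩ V_i| ≥ τ·|P_{i−1} ∪ V_i|, and (ii) λ ≤ λ₀/(1 − τ/2). Then the density of the group after removing empty column-blocks satisfies (Σ_{i=0}^{h−1} |W_i|) / (h·λ·Δ_W) ≥ τ/(2·Δ_W). -/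
open Finset

/-- **Theorem 1, general `Δ_W`.** Let `τ ∈ (0,1]` and `Δ_W ≥ 1`.
Let `W₀, …, W_{h−1}` be finite sets of naturals (the nonzero-column indices of
`h` rows), and let `V i` be the quotient row of `W i` with respect to the
uniform column partition of width `Δ_W`:
`j ∈ V i ↔ ∃ k ∈ W i, j·Δ_W ≤ k < (j+1)·Δ_W`. With `P i = V₀ ∪ ⋯ ∪ V i`
(so `(range i).biUnion V = P (i−1)`), `λ = |P (h−1)|`, `λ₀ = |V₀|`, assume `V₀`
nonempty, (i) for every `1 ≤ i ≤ h−1`, `|P (i−1) ∩ V i| ≥ τ·|P (i−1) ∪ V i|`,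
and (ii) `λ ≤ λ₀/(1 − τ/2)`. Then
`(∑_{i=0}^{h−1} |W i|) / (h·λ·Δ_W) ≥ τ/(2·Δ_W)`. -/
theorem group_density_ge_general (τ : ℝ) (hτ0 : 0 < τ) (hτ1 : τ ≤ 1)
    (ΔW : ℕ) (hΔW : 1 ≤ ΔW) (h : ℕ) (hh : 1 ≤ h)
    (W V : ℕ → Finset ℕ)
    (hquot : ∀ i j, j ∈ V i ↔ ∃ k ∈ W i, j * ΔW ≤ k ∧ k < (j + 1) * ΔW)
    (hV0 : (V 0).Nonempty)
    (hsim : ∀ i, 1 ≤ i → i ≤ h - 1 →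
      ((((Finset.range i).biUnion V) ∩ V i).card : ℝ)
        ≥ τ * ((((Finset.range i).biUnion V) ∪ V i).card : ℝ))
    (hgrow : ((((Finset.range h).biUnion V).card : ℝ))
        ≤ ((V 0).card : ℝ) / (1 - τ / 2)) :
    (∑ i ∈ Finset.range h, ((W i).card : ℝ))
        / ((h : ℝ) * (((Finset.range h).biUnion V).card : ℝ) * (ΔW : ℝ))
      ≥ τ / (2 * (ΔW : ℝ)) := by
  set lam : ℝ := (((Finset.range h).biUnion V).card : ℝ) with hlam
  have hΔpos : (0:ℝ) < (ΔW : ℝ) := by exact_mod_cast hΔW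
  have hτ2 : (0:ℝ) < 1 - τ/2 := by linarith
  -- λ₀ ≥ (1 - τ/2) λ
  have hlam0 : (1 - τ/2) * lam ≤ ((V 0).card : ℝ) := by
    rw [hlam]
    have := hgrow
    rw [le_div_iff₀ hτ2] at this
    linarith
  have hlampos : 0 < lam := by
    have h0mem : V 0 ⊆ (Finset.range h).biUnion V := by
      intro x hx
      exact Finset.mem_biUnion.mpr ⟨0, Finset.mem_range.mpr hh, hx⟩
    have : 0 < ((Finset.range h).biUnion V).card :=
      Finset.card_pos.mpr (hV0.mono h0mem)
    rw [hlam]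
    exact_mod_cast this
  -- |V i| ≤ |W i|
  have hVW : ∀ i, ((V i).card : ℝ) ≤ ((W i).card : ℝ) := by
    intro i
    have hsub : V i ⊆ (W i).image (· / ΔW) := by
      intro j hj
      obtain ⟨k, hk, h1, h2⟩ := (hquot i j).mp hj
      refine Finset.mem_image.mpr ⟨k, hk, ?_⟩
      exact Nat.div_eq_of_lt_le h1 h2
    have := (Finset.card_le_card hsub).trans (Finset.card_image_le)
    exact_mod_cast this
  -- |V i| ≥ τ λ / 2 for i < h
  have hkey : ∀ i ∈ Finset.range h, τ * lam / 2 ≤ ((V i).card : ℝ) := by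
    intro i hi
    rw [Finset.mem_range] at hi
    rcases Nat.eq_zero_or_pos i with rfl | hi1
    · nlinarith
    · have hsub : V 0 ⊆ ((Finset.range i).biUnion V) ∪ V i := by
        intro x hx
        exact Finset.mem_union_left _
          (Finset.mem_biUnion.mpr ⟨0, Finset.mem_range.mpr hi1, hx⟩)
      have hsub2 : ((Finset.range i).biUnion V) ∩ V i ⊆ V i :=
        Finset.inter_subset_right
      have h1 := hsim i hi1 (Nat.le_sub_one_of_lt hi)
      have h2 : ((V 0).card : ℝ) ≤ ((((Finset.range i).biUnion V) ∪ V i).card : ℝ) := by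
        exact_mod_cast Finset.card_le_card hsub
      have h3 : ((((Finset.range i).biUnion V) ∩ V i).card : ℝ) ≤ ((V i).card : ℝ) := by
        exact_mod_cast Finset.card_le_card hsub2
      nlinarith
  have hsum : (h : ℝ) * (τ * lam / 2) ≤ ∑ i ∈ Finset.range h, ((W i).card : ℝ) := by
    calc (h : ℝ) * (τ * lam / 2) = ∑ _i ∈ Finset.range h, (τ * lam / 2) := by
          rw [Finset.sum_const, Finset.card_range, nsmul_eq_mul]
      _ ≤ ∑ i ∈ Finset.range h, ((V i).card : ℝ) := Finset.sum_le_sum hkey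
      _ ≤ ∑ i ∈ Finset.range h, ((W i).card : ℝ) :=
          Finset.sum_le_sum fun i _ => hVW i
  have hhpos : (0:ℝ) < (h : ℝ) := by exact_mod_cast hh
  rw [ge_iff_le, div_le_div_iff₀ (by positivity) (by positivity)]
  nlinarith
end

section
/- (Pathological example for the naive merging rule.) Fix a natural number m ≥ 1 and set ℓ = m⁴. Define V_i = {0} for 0 ≤ i < ℓ and V_{ℓ+j} = {0, 1, …, j} for 0 ≤ j < m, and let P_i = V₀ ∪ ⋯ ∪ V_i. Then for every 1 ≤ i ≤ ℓ + m − 1, the Jaccard similarity of P_{i−1} and V_i is at least 1/2, i.e. 2·|P_{i−1} ∩ V_i| ≥ |P_{i−1} ∪ V_i|. -/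
open Finset

/-- **pathological example for the naive merging rule.**
Fix `m ≥ 1` and set `ℓ = m⁴`. Define `V i = {0}` for `0 ≤ i < ℓ` and
`V (ℓ+j) = {0, 1, …, j}` for `0 ≤ j < m`; let `P i = V₀ ∪ ⋯ ∪ V i`
(so `(range i).biUnion V = P (i−1)`). Then for every `1 ≤ i ≤ ℓ + m − 1`
the Jaccard similarity of `P (i−1)` and `V i` is at least `1/2`, i.e.
`2·|P (i−1) ∩ V i| ≥ |P (i−1) ∪ V i|`. -/
theorem pathological_jaccard_ge_half (m : ℕ) (hm : 1 ≤ m)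
    (V : ℕ → Finset ℕ)
    (hVlow : ∀ i, i < m ^ 4 → V i = {0})
    (hVhigh : ∀ j, j < m → V (m ^ 4 + j) = Finset.range (j + 1)) :
    ∀ i, 1 ≤ i → i ≤ m ^ 4 + m - 1 →
      2 * (((Finset.range i).biUnion V) ∩ V i).card
        ≥ (((Finset.range i).biUnion V) ∪ V i).card := by
  intro i hi1 hi2
  set ℓ := m ^ 4 with hℓ
  by_cases hcase : i ≤ ℓ
  · -- all relevant V's are {0}
    have hVi : V i = {0} := by
      rcases lt_or_eq_of_le hcase with h | h
      · exact hVlow i h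
      · have := hVhigh 0 hm
        simpa [h] using this
    have hB : (Finset.range i).biUnion V = {0} := by
      ext x
      simp only [mem_biUnion, mem_range, mem_singleton]
      constructor
      · rintro ⟨k, hk, hx⟩
        have : V k = {0} := hVlow k (lt_of_lt_of_le hk hcase)
        simpa [this] using hx
      · intro hx
        exact ⟨0, hi1, by simp [hVlow 0 (lt_of_lt_of_le hi1 hcase), hx]⟩
    simp [hB, hVi]
  · push_neg at hcase
    obtain ⟨j, rfl⟩ : ∃ j, i = ℓ + j := ⟨i - ℓ, by omega⟩
    have hj1 : 1 ≤ j := by omega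
    have hjm : j < m := by omega
    have hVi : V (ℓ + j) = Finset.range (j + 1) := hVhigh j hjm
    have hB : (Finset.range (ℓ + j)).biUnion V = Finset.range j := by
      ext x
      simp only [mem_biUnion, mem_range]
      constructor
      · rintro ⟨k, hk, hx⟩
        by_cases hkℓ : k < ℓ
        · have : V k = {0} := hVlow k hkℓ
          rw [this, mem_singleton] at hx
          omega
        · obtain ⟨j', rfl⟩ : ∃ j', k = ℓ + j' := ⟨k - ℓ, by omega⟩
          have hj' : j' < j := by omega
          rw [hVhigh j' (by omega), mem_range] at hx
          omega
      · intro hx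
        exact ⟨ℓ + x, by omega, by rw [hVhigh x (by omega), mem_range]; omega⟩
    have hint : Finset.range j ∩ Finset.range (j + 1) = Finset.range j := by
      apply Finset.inter_eq_left.mpr; exact Finset.range_subset_range.mpr (by omega)
    have huni : Finset.range j ∪ Finset.range (j + 1) = Finset.range (j + 1) := by
      apply Finset.union_eq_right.mpr
      exact Finset.range_subset_range.mpr (by omega)
    rw [hB, hVi, hint, huni, Finset.card_range, Finset.card_range]
    omega
end
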